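/- Let A be a symmetric matrix with nonnegative entries on a finite vertex set V, let C = {C₁,…,C_k} be a partition of V, let b ∈ V with block C(b), let Q = {q ∈ V : q ∉ C(b) and A[b,q] > 0}, and let A' = A'_{−b} be the degree/volume-preserving perturbation of A at b with respect to Q. Then the intra-block associations change exactly as follows: assoc(C(b), C(b) | A') = assoc(C(b), C(b) | A) + d_b^inter, where d_b^inter = Σ_{q∉C(b)} A[b,q], and for every block C_m ≠ C(b), assoc(C_m, C_m | A') = assoc(C_m, C_m | A) + Σ_{q∈C_m} A[b,q]. -/
import Mathlib


open Finset

/-- Degree/volume-preserving perturbation of `A` at `b` with respect to `Q`. -/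
noncomputable def perturb {V : Type*} [Fintype V] [DecidableEq V]
    (A : V → V → ℝ) (b : V) (Q : Finset V) : V → V → ℝ := fun i j =>
  if i = b ∧ j = b then A b b + ∑ q ∈ Q, A b q
  else if i = b ∧ j ∈ Q then 0
  else if j = b ∧ i ∈ Q then 0
  else if i = j ∧ i ∈ Q then A i i + A b i
  else A i j

/-- `assoc(S, T | A) = ∑_{s∈S, t∈T} A[s,t]`. -/
noncomputable def assoc {V : Type*} (A : V → V → ℝ) (S T : Finset V) : ℝ :=
  ∑ s ∈ S, ∑ t ∈ T, A s t

/-- The block of the partition (given by the labelling `cl`) with label `m`. -/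
def block {V ι : Type*} [Fintype V] [DecidableEq ι] (cl : V → ι) (m : ι) : Finset V :=
  univ.filter fun i => cl i = m

/-- Normalized association of the block labelled `m`:
`N_asso(C_m | A) = assoc(C_m, C_m | A) / assoc(C_m, V | A)`. -/
noncomputable def Nasso {V ι : Type*} [Fintype V] [DecidableEq ι]
    (A : V → V → ℝ) (cl : V → ι) (m : ι) : ℝ :=
  assoc A (block cl m) (block cl m) / assoc A (block cl m) univ

/-- Weighted inter-cluster degree of `b`: `d_b^inter = ∑_{q ∉ C(b)} A[b,q]`. -/
noncomputable def dinter {V ι : Type*} [Fintype V] [DecidableEq ι]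
    (A : V → V → ℝ) (cl : V → ι) (b : V) : ℝ :=
  ∑ q ∈ univ.filter (fun q => cl q ≠ cl b), A b q

/-- The set `Q` of inter-cluster neighbors of `b` (perturbation ratio α = 1). -/
noncomputable def interNbrs {V ι : Type*} [Fintype V] [DecidableEq ι]
    (A : V → V → ℝ) (cl : V → ι) (b : V) : Finset V :=
  univ.filter fun q => cl q ≠ cl b ∧ 0 < A b q

theorem stmt2 {V : Type*} [Fintype V] [DecidableEq V] {k : ℕ}
    (A : V → V → ℝ) (hsym : ∀ i j, A i j = A j i) (hnn : ∀ i j, 0 ≤ A i j)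
    (cl : V → Fin k) (hpart : Function.Surjective cl) (b : V) :
    assoc (perturb A b (interNbrs A cl b)) (block cl (cl b)) (block cl (cl b))
        = assoc A (block cl (cl b)) (block cl (cl b)) + dinter A cl b ∧
    ∀ m : Fin k, m ≠ cl b →
      assoc (perturb A b (interNbrs A cl b)) (block cl m) (block cl m)
        = assoc A (block cl m) (block cl m) + ∑ q ∈ block cl m, A b q := by
  set Q := interNbrs A cl b with hQ
  have hmemQ : ∀ x, x ∈ Q ↔ cl x ≠ cl b ∧ 0 < A b x := by
    intro x; simp [hQ, interNbrs]
  have hmemB : ∀ (m : Fin k) (x : V), x ∈ block cl m ↔ cl x = m := by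
    intro m x; simp [block]
  have hD : ∑ q ∈ Q, A b q = dinter A cl b := by
    rw [dinter]
    apply Finset.sum_subset
    · intro x hx
      simp only [mem_filter, mem_univ, true_and]
      exact ((hmemQ x).1 hx).1
    · intro x hx hxQ
      simp only [mem_filter, mem_univ, true_and] at hx
      have h0 : ¬ (0 < A b x) := fun h => hxQ ((hmemQ x).2 ⟨hx, h⟩)
      exact le_antisymm (not_lt.1 h0) (hnn b x)
  constructor
  · set S := block cl (cl b) with hS
    set D := ∑ q ∈ Q, A b q with hDdef
    have hbS : b ∈ S := (hmemB (cl b) b).2 rfl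
    have key : ∀ s ∈ S, ∀ t ∈ S,
        perturb A b Q s t = A s t + (if s = b ∧ t = b then D else 0) := by
      intro s hs t ht
      have hsQ : s ∉ Q := fun h => (((hmemQ s).1 h).1) ((hmemB _ s).1 hs)
      have htQ : t ∉ Q := fun h => (((hmemQ t).1 h).1) ((hmemB _ t).1 ht)
      by_cases h1 : s = b <;> by_cases h2 : t = b <;> subst_vars <;>
        simp_all [perturb]
    have extra : ∑ s ∈ S, ∑ t ∈ S, (if s = b ∧ t = b then D else 0) = D := by
      rw [Finset.sum_eq_single_of_mem b hbS]
      · simp [hbS]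
      · intro s _ hsb
        apply Finset.sum_eq_zero
        intro t _
        simp [hsb]
    rw [assoc, Finset.sum_congr rfl
      (fun s hs => Finset.sum_congr rfl (fun t ht => key s hs t ht))]
    simp only [Finset.sum_add_distrib]
    rw [extra, hD]
    rfl
  · intro m hm
    set S := block cl m with hS
    have key : ∀ s ∈ S, ∀ t ∈ S,
        perturb A b Q s t = A s t + (if s = t ∧ s ∈ Q then A b s else 0) := by
      intro s hs t ht
      have hsb : s ≠ b := by
        intro h; subst h; exact hm ((hmemB m s).1 hs).symm
      have htb : t ≠ b := by
        intro h; subst h; exact hm ((hmemB m t).1 ht).symm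
      by_cases h : s = t ∧ s ∈ Q
      · obtain ⟨rfl, hq⟩ := h
        simp [perturb, hsb, hq]
      · simp [perturb, hsb, htb, h]
    have extra : ∑ s ∈ S, ∑ t ∈ S, (if s = t ∧ s ∈ Q then A b s else 0)
        = ∑ s ∈ S, A b s := by
      apply Finset.sum_congr rfl
      intro s hs
      by_cases h2 : s ∈ Q
      · simp only [h2, and_true]
        rw [Finset.sum_ite_eq S s (fun _ => A b s)]
        simp [hs]
      · have hne : cl s ≠ cl b := by
          rw [(hmemB m s).1 hs]; exact hm
        have h0 : A b s = 0 :=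
          le_antisymm (not_lt.1 fun h => h2 ((hmemQ s).2 ⟨hne, h⟩)) (hnn b s)
        simp [h2, h0]
    rw [assoc, Finset.sum_congr rfl
      (fun s hs => Finset.sum_congr rfl (fun t ht => key s hs t ht))]
    simp only [Finset.sum_add_distrib]
    rw [extra]
    rfl
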